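/- arXiv:1312.3784 — 2 statements merged into one kernel-verified Lean document; each statement's English description precedes it below -/
import Mathlib

section
/- The bracket [(a,λ,μ),(b,λ₁,μ₁)] = ([a,b] + μ·D b − μ₁·D a, ψ(a,b), 0) on 𝔏 × ℂ × ℂ is bilinear over ℂ, alternating, and satisfies the Jacobi identity; i.e., the non-twisted affine Kac-Moody algebra L̂(g) = 𝔏 ⊕ ℂc ⊕ ℂd obtained by adjoining the derivation d = t·d/dt to the central extension is a Lie algebra over ℂ. -/
noncomputable section



lemma LP.add_apply (f g : LaurentPolynomial ℂ) (m : ℤ) : (f + g).coeff m = f.coeff m + g.coeff m :=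
  Finsupp.add_apply f.coeff g.coeff m

lemma LP.sub_apply (f g : LaurentPolynomial ℂ) (m : ℤ) : (f - g).coeff m = f.coeff m - g.coeff m :=
  Finsupp.sub_apply f.coeff g.coeff m

lemma LP.smul_apply (c : ℂ) (f : LaurentPolynomial ℂ) (m : ℤ) : (c • f).coeff m = c * f.coeff m :=
  Finsupp.smul_apply c f.coeff m

lemma LP.zero_apply (m : ℤ) : (0 : LaurentPolynomial ℂ).coeff m = 0 := rfl

lemma LP.sum_apply {ι : Type*} (s : Finset ι) (F : ι → LaurentPolynomial ℂ) (m : ℤ) :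
    (∑ i ∈ s, F i).coeff m = ∑ i ∈ s, (F i).coeff m := by
  rw [AddMonoidAlgebra.coeff_sum, Finsupp.finset_sum_apply]

def dL (f : LaurentPolynomial ℂ) : LaurentPolynomial ℂ :=
  AddMonoidAlgebra.ofCoeff (Finsupp.sum f.coeff fun n c => Finsupp.single n ((n : ℂ) * c))

lemma dL_apply (f : LaurentPolynomial ℂ) (m : ℤ) : (dL f).coeff m = (m : ℂ) * f.coeff m := by
  classical
  rw [dL, AddMonoidAlgebra.coeff_ofCoeff, Finsupp.sum_apply, Finsupp.sum]
  simp only [Finsupp.single_apply]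
  rw [Finset.sum_ite_eq' f.coeff.support m (fun n => (n : ℂ) * f.coeff n)]
  split_ifs with h
  · rfl
  · rw [Finsupp.notMem_support_iff.mp h, mul_zero]

lemma dL_add (f g : LaurentPolynomial ℂ) : dL (f + g) = dL f + dL g := by
  ext m; simp [dL_apply, LP.add_apply]; ring

lemma dL_smul (c : ℂ) (f : LaurentPolynomial ℂ) : dL (c • f) = c • dL f := by
  ext m; simp [dL_apply, LP.smul_apply]; ring

lemma dL_support (f : LaurentPolynomial ℂ) : (dL f).coeff.support ⊆ f.coeff.support := by
  intro m hm
  simp only [Finsupp.mem_support_iff] at hm ⊢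
  intro h
  exact hm (by rw [dL_apply, h, mul_zero])

lemma mul_apply' (f g : LaurentPolynomial ℂ) {S T : Finset ℤ}
    (hS : f.coeff.support ⊆ S) (hT : g.coeff.support ⊆ T) (m : ℤ) :
    (f * g).coeff m = ∑ p ∈ S, ∑ q ∈ T, if p + q = m then f.coeff p * g.coeff q else 0 := by
  classical
  rw [AddMonoidAlgebra.coeff_mul, Finsupp.sum]
  rw [Finset.sum_subset hS]
  · refine Finset.sum_congr rfl fun p _ => ?_
    rw [Finsupp.sum, Finset.sum_subset hT]
    intro q _ hq
    rw [Finsupp.notMem_support_iff.mp hq, mul_zero]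
    simp
  · intro p _ hp
    rw [Finsupp.notMem_support_iff.mp hp]
    simp [Finsupp.sum]

lemma dL_mul (f g : LaurentPolynomial ℂ) : dL (f * g) = dL f * g + f * dL g := by
  classical
  ext m
  rw [LP.add_apply, dL_apply,
    mul_apply' f g (le_refl f.coeff.support) (le_refl g.coeff.support) m,
    mul_apply' (dL f) g (dL_support f) (le_refl g.coeff.support) m,
    mul_apply' f (dL g) (le_refl f.coeff.support) (dL_support g) m,
    Finset.mul_sum, ← Finset.sum_add_distrib]
  refine Finset.sum_congr rfl fun p _ => ?_
  rw [Finset.mul_sum, ← Finset.sum_add_distrib]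
  refine Finset.sum_congr rfl fun q _ => ?_
  simp only [dL_apply]
  split_ifs with h
  · rw [← h]; push_cast; ring
  · simp

lemma mul_apply_zero (f g : LaurentPolynomial ℂ) {S : Finset ℤ} (hS : f.coeff.support ⊆ S) :
    (f * g).coeff 0 = ∑ p ∈ S, f.coeff p * g.coeff (-p) := by
  classical
  rw [mul_apply' f g hS (le_refl g.coeff.support) 0]
  refine Finset.sum_congr rfl fun p _ => ?_
  have : ∀ q : ℤ, (p + q = 0) = (q = -p) := fun q => by
    apply propext; omega
  simp only [this]
  rw [Finset.sum_ite_eq' g.coeff.support (-p) (fun q => f.coeff p * g.coeff q)]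
  split_ifs with h
  · rfl
  · rw [Finsupp.notMem_support_iff.mp h, mul_zero]


/-- The loop algebra: `N × N` matrices over Laurent polynomials, a Lie ring under the
commutator bracket `⁅a, b⁆ = a * b - b * a`. -/
abbrev Loop (N : ℕ) := Matrix (Fin N) (Fin N) (LaurentPolynomial ℂ)

/-- The matrix of `n`-th Laurent coefficients of the entries of `a`. -/
def coeffM {N : ℕ} (a : Loop N) (n : ℤ) : Matrix (Fin N) (Fin N) ℂ :=
  fun i j => (a i j).coeff n

/-- The cocycle `ψ(a,b) = Σₙ n · trace(aₙ * b₋ₙ)`, i.e. `Res(tr((da/dt)·b))`. -/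
def psi {N : ℕ} (a b : Loop N) : ℂ :=
  ∑ᶠ n : ℤ, (n : ℂ) * Matrix.trace (coeffM a n * coeffM b (-n))

/-- The derivation `D = t·d/dt`, acting on coefficients by `(D a)ₙ = n · aₙ`. -/
def Dmap {N : ℕ} (a : Loop N) : Loop N :=
  fun i j => AddMonoidAlgebra.ofCoeff (Finsupp.sum (a i j).coeff fun n c => Finsupp.single n ((n : ℂ) * c))

/-- The bracket of the non-twisted affine Kac-Moody algebra $\hat L(g) = 𝔏 ⊕ ℂc ⊕ ℂd$:
`[(a,λ,μ),(b,λ₁,μ₁)] = ([a,b] + μ·D b − μ₁·D a, ψ(a,b), 0)`. -/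
def brKM {N : ℕ} (x y : Loop N × ℂ × ℂ) : Loop N × ℂ × ℂ :=
  (⁅x.1, y.1⁆ + x.2.2 • Dmap y.1 - y.2.2 • Dmap x.1, psi x.1 y.1, 0)


variable {N : ℕ}


lemma Dmap_apply (a : Loop N) (i j : Fin N) : Dmap a i j = dL (a i j) := rfl

lemma Dmap_add (a b : Loop N) : Dmap (a + b) = Dmap a + Dmap b := by
  funext i j
  show dL ((a + b) i j) = Dmap a i j + Dmap b i j
  rw [Matrix.add_apply, dL_add, Dmap_apply, Dmap_apply]

lemma Dmap_smul (c : ℂ) (a : Loop N) : Dmap (c • a) = c • Dmap a := by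
  funext i j
  show dL ((c • a) i j) = (c • Dmap a) i j
  rw [Matrix.smul_apply, Matrix.smul_apply, dL_smul, Dmap_apply]

lemma Dmap_sub (a b : Loop N) : Dmap (a - b) = Dmap a - Dmap b := by
  have h : Dmap ((-1 : ℂ) • b) = (-1 : ℂ) • Dmap b := Dmap_smul _ _
  have := Dmap_add a ((-1 : ℂ) • b)
  rw [h] at this
  simpa [sub_eq_add_neg, neg_one_smul] using this

lemma dL_sum {ι : Type*} (s : Finset ι) (F : ι → LaurentPolynomial ℂ) :
    dL (∑ i ∈ s, F i) = ∑ i ∈ s, dL (F i) := by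
  classical
  induction s using Finset.induction with
  | empty => ext m; simp [dL_apply]
  | insert _ _ h ih => rw [Finset.sum_insert h, Finset.sum_insert h, dL_add, ih]

lemma Dmap_mul (a b : Loop N) : Dmap (a * b) = Dmap a * b + a * Dmap b := by
  funext i j
  show dL ((a * b) i j) = (Dmap a * b + a * Dmap b) i j
  rw [Matrix.mul_apply, dL_sum, Matrix.add_apply, Matrix.mul_apply, Matrix.mul_apply,
    ← Finset.sum_add_distrib]
  exact Finset.sum_congr rfl fun k _ => by rw [dL_mul, Dmap_apply, Dmap_apply]

lemma Dmap_lie (a b : Loop N) : Dmap ⁅a, b⁆ = ⁅Dmap a, b⁆ + ⁅a, Dmap b⁆ := by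
  simp only [Ring.lie_def, Dmap_sub, Dmap_mul]
  abel

lemma psi_eq (a b : Loop N) : psi a b = (Matrix.trace (Dmap a * b)).coeff 0 := by
  classical
  set S := Finset.univ.biUnion (fun p : Fin N × Fin N => (a p.1 p.2).coeff.support) with hSdef
  have hsub : ∀ i k : Fin N, (a i k).coeff.support ⊆ S := by
    intro i k
    exact Finset.subset_biUnion_of_mem (fun p : Fin N × Fin N => (a p.1 p.2).coeff.support)
      (Finset.mem_univ (i, k))
  have h1 : psi a b = ∑ n ∈ S, (n : ℂ) * Matrix.trace (coeffM a n * coeffM b (-n)) := by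
    apply finsum_eq_sum_of_support_subset
    intro n hn
    simp only [Function.mem_support] at hn
    by_contra hnS
    apply hn
    have hz : coeffM a n = 0 := by
      funext i k
      by_contra hik
      exact hnS (hsub i k (Finsupp.mem_support_iff.mpr hik))
    rw [hz, Matrix.zero_mul, Matrix.trace_zero, mul_zero]
  have h3 : ∀ n : ℤ, (n : ℂ) * Matrix.trace (coeffM a n * coeffM b (-n)) =
      ∑ i : Fin N, ∑ k : Fin N, (n : ℂ) * (a i k).coeff n * (b k i).coeff (-n) := by
    intro n
    rw [Matrix.trace, Finset.mul_sum]
    refine Finset.sum_congr rfl fun i _ => ?_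
    rw [Matrix.diag_apply, Matrix.mul_apply, Finset.mul_sum]
    exact Finset.sum_congr rfl fun k _ => by rw [mul_assoc]; rfl
  have h2 : (Matrix.trace (Dmap a * b)).coeff 0 =
      ∑ i : Fin N, ∑ k : Fin N, ∑ p ∈ S, (p : ℂ) * (a i k).coeff p * (b k i).coeff (-p) := by
    rw [Matrix.trace, LP.sum_apply]
    refine Finset.sum_congr rfl fun i _ => ?_
    rw [Matrix.diag_apply, Matrix.mul_apply, LP.sum_apply]
    refine Finset.sum_congr rfl fun k _ => ?_
    rw [Dmap_apply, mul_apply_zero _ _ ((dL_support _).trans (hsub i k))]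
    exact Finset.sum_congr rfl fun p _ => by rw [dL_apply, mul_assoc]
  rw [h1, h2]
  simp only [h3]
  rw [Finset.sum_comm]
  exact Finset.sum_congr rfl fun i _ => Finset.sum_comm

lemma psi_add_left (a b c : Loop N) : psi (a + b) c = psi a c + psi b c := by
  simp only [psi_eq, Dmap_add, add_mul, Matrix.trace_add, LP.add_apply]

lemma psi_add_right (a b c : Loop N) : psi a (b + c) = psi a b + psi a c := by
  simp only [psi_eq, mul_add, Matrix.trace_add, LP.add_apply]

lemma psi_smul_left (r : ℂ) (a b : Loop N) : psi (r • a) b = r * psi a b := by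
  simp only [psi_eq, Dmap_smul, Matrix.smul_mul, Matrix.trace_smul, LP.smul_apply]

lemma psi_smul_right (r : ℂ) (a b : Loop N) : psi a (r • b) = r * psi a b := by
  simp only [psi_eq, Matrix.mul_smul, Matrix.trace_smul, LP.smul_apply]

lemma trace_Dmap_zero (x : Loop N) : (Matrix.trace (Dmap x)).coeff 0 = 0 := by
  rw [Matrix.trace, LP.sum_apply]
  refine Finset.sum_eq_zero fun i _ => ?_
  rw [Matrix.diag_apply, Dmap_apply, dL_apply]
  simp

lemma psi_skew (a b : Loop N) : psi b a = - psi a b := by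
  have h := trace_Dmap_zero (a * b)
  rw [Dmap_mul, Matrix.trace_add, Matrix.trace_mul_comm a (Dmap b), LP.add_apply] at h
  rw [psi_eq, psi_eq]
  linear_combination h

lemma psi_self (a : Loop N) : psi a a = 0 := by
  have h := psi_skew a a
  linear_combination h / 2

lemma psi_D_symm (a b : Loop N) : psi a (Dmap b) = psi b (Dmap a) := by
  rw [psi_eq, psi_eq, Matrix.trace_mul_comm]

lemma key_cyclic (x y z : Loop N) :
    (Matrix.trace (Dmap x * (y * z))).coeff 0 + (Matrix.trace (Dmap y * (z * x))).coeff 0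
      + (Matrix.trace (Dmap z * (x * y))).coeff 0 = 0 := by
  have e1 : Matrix.trace (x * (Dmap y * z)) = Matrix.trace (Dmap y * (z * x)) := by
    rw [Matrix.trace_mul_comm, Matrix.mul_assoc]
  have e2 : Matrix.trace (x * (y * Dmap z)) = Matrix.trace (Dmap z * (x * y)) := by
    rw [← Matrix.mul_assoc, Matrix.trace_mul_comm]
  have h := trace_Dmap_zero (x * (y * z))
  rw [Dmap_mul, Dmap_mul, mul_add, Matrix.trace_add, Matrix.trace_add, e1, e2,
    LP.add_apply, LP.add_apply] at h
  linear_combination h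

lemma psi_cocycle (a b c : Loop N) :
    psi a ⁅b, c⁆ + psi b ⁅c, a⁆ + psi c ⁅a, b⁆ = 0 := by
  have h1 := key_cyclic a b c
  have h2 := key_cyclic a c b
  simp only [psi_eq, Ring.lie_def, mul_sub, Matrix.trace_sub, LP.sub_apply]
  linear_combination h1 - h2

lemma psi_sub_right (a b c : Loop N) : psi a (b - c) = psi a b - psi a c := by
  simp only [psi_eq, mul_sub, Matrix.trace_sub, LP.sub_apply]


/-- The affine Kac-Moody algebra $𝔏 ⊕ ℂc ⊕ ℂd$ is a Lie algebra over ℂ: the bracket is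
ℂ-bilinear, alternating and satisfies the Jacobi identity. -/
theorem affineKacMoody_isLieAlgebra (N : ℕ) (hN : 0 < N) :
    (∀ x y z : Loop N × ℂ × ℂ, brKM (x + y) z = brKM x z + brKM y z) ∧
    (∀ (c : ℂ) (x y : Loop N × ℂ × ℂ), brKM (c • x) y = c • brKM x y) ∧
    (∀ x y z : Loop N × ℂ × ℂ, brKM x (y + z) = brKM x y + brKM x z) ∧
    (∀ (c : ℂ) (x y : Loop N × ℂ × ℂ), brKM x (c • y) = c • brKM x y) ∧
    (∀ x : Loop N × ℂ × ℂ, brKM x x = 0) ∧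
    (∀ x y z : Loop N × ℂ × ℂ,
      brKM x (brKM y z) + brKM y (brKM z x) + brKM z (brKM x y) = 0) := by
  refine ⟨?_, ?_, ?_, ?_, ?_, ?_⟩
  · rintro ⟨a, la, ma⟩ ⟨b, lb, mb⟩ ⟨c, lc, mc⟩
    simp only [brKM, Prod.ext_iff, Prod.fst_add, Prod.snd_add, psi_add_left]
    refine ⟨?_, ?_, ?_⟩
    · simp only [Ring.lie_def, add_mul, mul_add, Dmap_add, add_smul, smul_add]
      abel
    · trivial
    · simp
  · rintro r ⟨a, la, ma⟩ ⟨b, lb, mb⟩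
    simp only [brKM, Prod.ext_iff, Prod.smul_fst, Prod.smul_snd, psi_smul_left, smul_eq_mul]
    refine ⟨?_, ?_, ?_⟩
    · simp only [Ring.lie_def, Matrix.smul_mul, Matrix.mul_smul, Dmap_smul, smul_sub, smul_add, smul_smul, smul_eq_mul]
      module
    · trivial
    · simp
  · rintro ⟨a, la, ma⟩ ⟨b, lb, mb⟩ ⟨c, lc, mc⟩
    simp only [brKM, Prod.ext_iff, Prod.fst_add, Prod.snd_add, psi_add_right]
    refine ⟨?_, ?_, ?_⟩
    · simp only [Ring.lie_def, add_mul, mul_add, Dmap_add, add_smul, smul_add]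
      abel
    · trivial
    · simp
  · rintro r ⟨a, la, ma⟩ ⟨b, lb, mb⟩
    simp only [brKM, Prod.ext_iff, Prod.smul_fst, Prod.smul_snd, psi_smul_right, smul_eq_mul]
    refine ⟨?_, ?_, ?_⟩
    · simp only [Ring.lie_def, Matrix.smul_mul, Matrix.mul_smul, Dmap_smul, smul_sub, smul_add, smul_smul, smul_eq_mul]
      module
    · trivial
    · simp
  · rintro ⟨a, la, ma⟩
    simp only [brKM, Prod.ext_iff, Prod.fst_zero, Prod.snd_zero]
    refine ⟨?_, ?_, ?_⟩
    · simp [Ring.lie_def]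
    · exact psi_self a
    · trivial
  · rintro ⟨a, la, ma⟩ ⟨b, lb, mb⟩ ⟨c, lc, mc⟩
    simp only [brKM, Prod.ext_iff, Prod.fst_add, Prod.snd_add, Prod.fst_zero, Prod.snd_zero]
    refine ⟨?_, ?_, ?_⟩
    · simp only [Ring.lie_def, zero_smul, sub_zero, Dmap_add, Dmap_sub, Dmap_smul, Dmap_mul,
        smul_add, smul_sub, smul_smul, mul_add, add_mul, mul_sub, sub_mul, mul_assoc,
        Matrix.mul_smul, Matrix.smul_mul]
      module
    · simp only [psi_add_right, psi_sub_right, psi_smul_right]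
      linear_combination psi_cocycle a b c + mb * psi_D_symm a c - mc * psi_D_symm a b
        - ma * psi_D_symm b c
    · simp
end
end

section
/- For N = 2, let e = E₁₂, f = E₂₁, h = E₁₁ − E₂₂ be the constant matrices in 𝔏 (so e = [[0,1],[0,0]], f = [[0,0],[1,0]], h = [[1,0],[0,−1]]). Then the compact real form of the loop algebra of sl₂, namely {X ∈ 𝔏 : ω(X) = X and trace(X) = 0}, equals the ℝ-linear span of the set {tⁿ·e − t⁻ⁿ·f, i·(tⁿ·e + t⁻ⁿ·f), tⁿ·h − t⁻ⁿ·h, i·(tⁿ·h + t⁻ⁿ·h) : n ∈ ℤ}, where tⁿ·X denotes the element of 𝔏 whose only nonzero coefficient matrix is X in degree n. -/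
noncomputable section

/-- The Cartan involution `ω`, determined by `(ω a)ₙ = −(a₋ₙ)ᴴ` for all `n : ℤ`,
i.e. the map `X(t) ↦ −conj(X)(t⁻¹)ᵗ`. -/
def omega {N : ℕ} (a : Loop N) : Loop N :=
  fun i j => AddMonoidAlgebra.ofCoeff
    (Finsupp.sum (a j i).coeff fun n c => Finsupp.single (-n) (-(starRingEnd ℂ c)))

/-- `tpow n X` is `tⁿ·X`, the element of the loop algebra whose only nonzero coefficient
matrix is `X`, in degree `n`. -/
def tpow {N : ℕ} (n : ℤ) (X : Matrix (Fin N) (Fin N) ℂ) : Loop N :=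
  fun i j => AddMonoidAlgebra.ofCoeff (Finsupp.single n (X i j))

/-- The generator `e = E₁₂`. -/
def eMat : Matrix (Fin 2) (Fin 2) ℂ := !![0, 1; 0, 0]

/-- The generator `f = E₂₁`. -/
def fMat : Matrix (Fin 2) (Fin 2) ℂ := !![0, 0; 1, 0]

/-- The generator `h = E₁₁ − E₂₂`. -/
def hMat : Matrix (Fin 2) (Fin 2) ℂ := !![1, 0; 0, -1]

open Matrix

instance : CoeFun (LaurentPolynomial ℂ) (fun _ => ℤ → ℂ) := ⟨fun f => f.coeff⟩

lemma lp_add_apply (f g : LaurentPolynomial ℂ) (m : ℤ) : (f + g) m = f m + g m := rfl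
lemma lp_neg_apply (f : LaurentPolynomial ℂ) (m : ℤ) : (-f) m = -(f m) := rfl
lemma lp_smul_apply (c : ℂ) (f : LaurentPolynomial ℂ) (m : ℤ) : (c • f) m = c * f m := rfl
lemma lp_rsmul_apply (r : ℝ) (f : LaurentPolynomial ℂ) (m : ℤ) : (r • f) m = r • (f m) := rfl
lemma lp_zero_apply (m : ℤ) : (0 : LaurentPolynomial ℂ) m = 0 := rfl

lemma sum_single_neg_apply (f : ℤ →₀ ℂ) (m : ℤ) :
    (Finsupp.sum f fun n c => Finsupp.single (-n) (-(starRingEnd ℂ c))) m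
      = -(starRingEnd ℂ (f (-m))) := by
  rw [Finsupp.sum_apply, Finsupp.sum]
  simp only [Finsupp.single_apply]
  rcases em ((-m) ∈ f.support) with h | h
  · rw [Finset.sum_eq_single (-m)]
    · simp
    · intro b _ hb; rw [if_neg (by omega)]
    · intro hn; exact absurd h hn
  · rw [Finset.sum_eq_zero]
    · simp [Finsupp.notMem_support_iff.mp h]
    · intro b hb
      rw [if_neg]
      intro hbm
      exact h (by rw [show -m = b by omega]; exact hb)

lemma omega_coeff {N : ℕ} (a : Loop N) (i j : Fin N) (m : ℤ) :
    (omega a i j) m = -(starRingEnd ℂ ((a j i) (-m))) :=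
  sum_single_neg_apply _ _

lemma omega_add {N : ℕ} (a b : Loop N) : omega (a + b) = omega a + omega b := by
  funext i j; ext m
  simp only [omega_coeff, Matrix.add_apply, lp_add_apply, map_add, neg_add]

lemma omega_neg {N : ℕ} (a : Loop N) : omega (-a) = -(omega a) := by
  funext i j; ext m
  simp only [omega_coeff, Matrix.neg_apply, lp_neg_apply, map_neg, neg_neg]

lemma omega_sub {N : ℕ} (a b : Loop N) : omega (a - b) = omega a - omega b := by
  rw [sub_eq_add_neg, omega_add, omega_neg, sub_eq_add_neg]

lemma omega_smul {N : ℕ} (c : ℂ) (a : Loop N) :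
    omega (c • a) = (starRingEnd ℂ c) • omega a := by
  funext i j; ext m
  simp only [omega_coeff, Matrix.smul_apply, lp_smul_apply, _root_.map_mul,
    Finsupp.smul_apply, smul_eq_mul]
  ring

lemma omega_real_smul {N : ℕ} (r : ℝ) (a : Loop N) :
    omega (r • a) = r • omega a := by
  funext i j; ext m
  simp only [omega_coeff, Matrix.smul_apply, lp_rsmul_apply]
  rw [Complex.real_smul, Complex.real_smul, _root_.map_mul, Complex.conj_ofReal]
  ring

lemma omega_zero {N : ℕ} : omega (0 : Loop N) = 0 := by
  funext i j; ext m
  simp only [omega_coeff, Matrix.zero_apply, lp_zero_apply, map_zero, neg_zero]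

lemma tpow_apply {N : ℕ} (n m : ℤ) (A : Matrix (Fin N) (Fin N) ℂ) (i j : Fin N) :
    (tpow n A i j) m = if n = m then A i j else 0 := Finsupp.single_apply

lemma omega_tpow {N : ℕ} (n : ℤ) (A : Matrix (Fin N) (Fin N) ℂ) :
    omega (tpow n A) = tpow (-n) (-(Aᴴ)) := by
  funext i j; ext m
  rw [omega_coeff]
  simp only [tpow_apply, Matrix.neg_apply, Matrix.conjTranspose_apply]
  by_cases h : n = -m
  · rw [if_pos h, if_pos (by omega)]; rw [starRingEnd_apply]
  · rw [if_neg h, if_neg (by omega)]; simp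

lemma tpow_add {N : ℕ} (n : ℤ) (A B : Matrix (Fin N) (Fin N) ℂ) :
    tpow n (A + B) = tpow n A + tpow n B := by
  funext i j
  show AddMonoidAlgebra.ofCoeff (Finsupp.single n (A i j + B i j)) = _
  rw [Finsupp.single_add]; rfl

lemma tpow_neg {N : ℕ} (n : ℤ) (A : Matrix (Fin N) (Fin N) ℂ) :
    tpow n (-A) = -(tpow n A) := by
  funext i j
  show AddMonoidAlgebra.ofCoeff (Finsupp.single n (-(A i j))) = _
  rw [Finsupp.single_neg]; rfl

lemma tpow_smul {N : ℕ} (n : ℤ) (c : ℂ) (A : Matrix (Fin N) (Fin N) ℂ) :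
    tpow n (c • A) = c • tpow n A := by
  funext i j
  show AddMonoidAlgebra.ofCoeff (Finsupp.single n (c • (A i j))) = c • (tpow n A) i j
  exact congrArg AddMonoidAlgebra.ofCoeff (Finsupp.smul_single c n (A i j)).symm

lemma trace_tpow {N : ℕ} (n : ℤ) (A : Matrix (Fin N) (Fin N) ℂ) :
    Matrix.trace (tpow n A) = AddMonoidAlgebra.ofCoeff (Finsupp.single n (Matrix.trace A)) := by
  rw [Matrix.trace, Matrix.trace]
  show ∑ i, AddMonoidAlgebra.ofCoeff (Finsupp.singleAddHom n (A i i)) = _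
  rw [← AddMonoidAlgebra.ofCoeff_sum, ← map_sum]
  rfl

-- matrix facts
lemma eMat_ct : eMatᴴ = fMat := by
  ext i j; fin_cases i <;> fin_cases j <;>
    simp [eMat, fMat, Matrix.conjTranspose_apply]

lemma fMat_ct : fMatᴴ = eMat := by
  ext i j; fin_cases i <;> fin_cases j <;>
    simp [eMat, fMat, Matrix.conjTranspose_apply]

lemma hMat_ct : hMatᴴ = hMat := by
  ext i j; fin_cases i <;> fin_cases j <;>
    simp [hMat, Matrix.conjTranspose_apply]

lemma eMat_tr : Matrix.trace eMat = 0 := by simp [eMat, Matrix.trace_fin_two]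
lemma fMat_tr : Matrix.trace fMat = 0 := by simp [fMat, Matrix.trace_fin_two]
lemma hMat_tr : Matrix.trace hMat = 0 := by simp [hMat, Matrix.trace_fin_two]

-- the submodule of fixed traceless elements
def K : Submodule ℝ (Loop 2) where
  carrier := {X : Loop 2 | omega X = X ∧ Matrix.trace X = 0}
  add_mem' := by
    rintro a b ⟨ha1, ha2⟩ ⟨hb1, hb2⟩
    exact ⟨by rw [omega_add, ha1, hb1], by rw [Matrix.trace_add, ha2, hb2, add_zero]⟩
  zero_mem' := ⟨omega_zero, by simp⟩
  smul_mem' := by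
    rintro r a ⟨ha1, ha2⟩
    exact ⟨by rw [omega_real_smul, ha1], by rw [Matrix.trace_smul, ha2, smul_zero]⟩

def S : Set (Loop 2) :=
  {x : Loop 2 | ∃ n : ℤ,
    x = tpow n eMat - tpow (-n) fMat ∨
    x = Complex.I • (tpow n eMat + tpow (-n) fMat) ∨
    x = tpow n hMat - tpow (-n) hMat ∨
    x = Complex.I • (tpow n hMat + tpow (-n) hMat)}

lemma S_sub_K : S ⊆ (K : Set (Loop 2)) := by
  rintro x ⟨n, h | h | h | h⟩ <;> subst h <;> constructor
  · rw [omega_sub, omega_tpow, omega_tpow, eMat_ct, fMat_ct, tpow_neg, tpow_neg]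
    simp only [neg_neg]
    module
  · rw [Matrix.trace_sub, trace_tpow, trace_tpow, eMat_tr, fMat_tr]; simp
  · rw [omega_smul, omega_add, omega_tpow, omega_tpow, eMat_ct, fMat_ct, tpow_neg,
      tpow_neg]
    simp only [neg_neg]
    rw [show (starRingEnd ℂ) Complex.I = -Complex.I by simp]
    module
  · rw [Matrix.trace_smul, Matrix.trace_add, trace_tpow, trace_tpow, eMat_tr, fMat_tr]
    simp
  · rw [omega_sub, omega_tpow, omega_tpow, hMat_ct, tpow_neg, tpow_neg]
    simp only [neg_neg]
    module
  · rw [Matrix.trace_sub, trace_tpow, trace_tpow, hMat_tr]; simp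
  · rw [omega_smul, omega_add, omega_tpow, omega_tpow, hMat_ct, tpow_neg, tpow_neg]
    simp only [neg_neg]
    rw [show (starRingEnd ℂ) Complex.I = -Complex.I by simp]
    module
  · rw [Matrix.trace_smul, Matrix.trace_add, trace_tpow, trace_tpow, hMat_tr]
    simp

-- key span membership lemmas
lemma key_e (n : ℤ) (a : ℂ) :
    a • tpow n eMat - (starRingEnd ℂ a) • tpow (-n) fMat ∈ Submodule.span ℝ S := by
  have h1 : (tpow n eMat - tpow (-n) fMat) ∈ Submodule.span ℝ S :=
    Submodule.subset_span ⟨n, Or.inl rfl⟩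
  have h2 : (Complex.I • (tpow n eMat + tpow (-n) fMat)) ∈ Submodule.span ℝ S :=
    Submodule.subset_span ⟨n, Or.inr (Or.inl rfl)⟩
  have key : a • tpow n eMat - (starRingEnd ℂ a) • tpow (-n) fMat
      = a.re • (tpow n eMat - tpow (-n) fMat)
        + a.im • (Complex.I • (tpow n eMat + tpow (-n) fMat)) := by
    match_scalars
    all_goals simp [Complex.ext_iff]
  rw [key]
  exact Submodule.add_mem _ (Submodule.smul_mem _ _ h1) (Submodule.smul_mem _ _ h2)

lemma key_h (n : ℤ) (a : ℂ) :
    a • tpow n hMat - (starRingEnd ℂ a) • tpow (-n) hMat ∈ Submodule.span ℝ S := by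
  have h1 : (tpow n hMat - tpow (-n) hMat) ∈ Submodule.span ℝ S :=
    Submodule.subset_span ⟨n, Or.inr (Or.inr (Or.inl rfl))⟩
  have h2 : (Complex.I • (tpow n hMat + tpow (-n) hMat)) ∈ Submodule.span ℝ S :=
    Submodule.subset_span ⟨n, Or.inr (Or.inr (Or.inr rfl))⟩
  have key : a • tpow n hMat - (starRingEnd ℂ a) • tpow (-n) hMat
      = a.re • (tpow n hMat - tpow (-n) hMat)
        + a.im • (Complex.I • (tpow n hMat + tpow (-n) hMat)) := by
    match_scalars
    all_goals simp [Complex.ext_iff]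
  rw [key]
  exact Submodule.add_mem _ (Submodule.smul_mem _ _ h1) (Submodule.smul_mem _ _ h2)

lemma sl2_decomp (A : Matrix (Fin 2) (Fin 2) ℂ) (hA : Matrix.trace A = 0) :
    A = A 0 1 • eMat + A 1 0 • fMat + A 0 0 • hMat := by
  have h11 : A 1 1 = -(A 0 0) := by
    rw [Matrix.trace_fin_two] at hA; linear_combination hA
  ext i j
  fin_cases i <;> fin_cases j <;>
    simp [eMat, fMat, hMat, h11, Matrix.add_apply, Matrix.smul_apply]

lemma sl2_decomp_ct (A : Matrix (Fin 2) (Fin 2) ℂ) (hA : Matrix.trace A = 0) :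
    Aᴴ = (starRingEnd ℂ (A 1 0)) • eMat + (starRingEnd ℂ (A 0 1)) • fMat
        + (starRingEnd ℂ (A 0 0)) • hMat := by
  have h11 : A 1 1 = -(A 0 0) := by
    rw [Matrix.trace_fin_two] at hA; linear_combination hA
  ext i j
  fin_cases i <;> fin_cases j <;>
    simp [eMat, fMat, hMat, h11, Matrix.conjTranspose_apply, Matrix.add_apply,
      Matrix.smul_apply]

lemma key_pair (n : ℤ) (A : Matrix (Fin 2) (Fin 2) ℂ) (hA : Matrix.trace A = 0) :
    tpow n A - tpow (-n) Aᴴ ∈ Submodule.span ℝ S := by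
  have h1 := key_e n (A 0 1)
  have h2 := key_h n (A 0 0)
  have h3 := key_e (-n) (starRingEnd ℂ (A 1 0))
  rw [neg_neg, Complex.conj_conj] at h3
  have e1 : tpow n A = A 0 1 • tpow n eMat + A 1 0 • tpow n fMat
      + A 0 0 • tpow n hMat := by
    conv_lhs => rw [sl2_decomp A hA]
    rw [tpow_add, tpow_add, tpow_smul, tpow_smul, tpow_smul]
  have e2 : tpow (-n) Aᴴ = (starRingEnd ℂ (A 1 0)) • tpow (-n) eMat
      + (starRingEnd ℂ (A 0 1)) • tpow (-n) fMat
      + (starRingEnd ℂ (A 0 0)) • tpow (-n) hMat := by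
    rw [sl2_decomp_ct A hA, tpow_add, tpow_add, tpow_smul, tpow_smul, tpow_smul]
  have key : tpow n A - tpow (-n) Aᴴ
      = (A 0 1 • tpow n eMat - (starRingEnd ℂ (A 0 1)) • tpow (-n) fMat)
        + (A 0 0 • tpow n hMat - (starRingEnd ℂ (A 0 0)) • tpow (-n) hMat)
        - ((starRingEnd ℂ (A 1 0)) • tpow (-n) eMat - A 1 0 • tpow n fMat) := by
    rw [e1, e2]; module
  rw [key]
  exact Submodule.sub_mem _ (Submodule.add_mem _ h1 h2) h3

lemma lp_sum_apply {α : Type*} (s : Finset α) (f : α → LaurentPolynomial ℂ) (m : ℤ) :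
    (∑ x ∈ s, f x) m = ∑ x ∈ s, (f x) m := by
  classical
  induction s using Finset.induction with
  | empty => rfl
  | insert a s h ih => rw [Finset.sum_insert h, Finset.sum_insert h, lp_add_apply, ih]

lemma sum_tpow (X : Loop 2) (T : Finset ℤ)
    (hT : ∀ (i j : Fin 2) (m : ℤ), (X i j) m ≠ 0 → m ∈ T) :
    ∑ n ∈ T, tpow n (coeffM X n) = X := by
  funext i j
  ext m
  rw [Matrix.sum_apply, lp_sum_apply]
  simp only [tpow_apply]
  rw [Finset.sum_ite_eq' T m (fun n => coeffM X n i j)]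
  by_cases hm : m ∈ T
  · rw [if_pos hm]; rfl
  · rw [if_neg hm]
    by_contra hc
    exact hm (hT i j m fun h0 => hc h0.symm)

theorem compactRealForm_sl2' :
    {X : Loop 2 | omega X = X ∧ Matrix.trace X = 0} = ↑(Submodule.span ℝ S) := by
  apply Set.Subset.antisymm
  · rintro X ⟨hω, htr⟩
    classical
    set T0 : Finset ℤ :=
      Finset.univ.biUnion (fun p : Fin 2 × Fin 2 => (X p.1 p.2).coeff.support) with hT0
    set T : Finset ℤ := T0 ∪ T0.image (fun n => -n) with hTdef
    have hT : ∀ (i j : Fin 2) (m : ℤ), (X i j) m ≠ 0 → m ∈ T := by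
      intro i j m hm
      exact Finset.mem_union_left _
        (Finset.mem_biUnion.mpr ⟨(i, j), Finset.mem_univ _,
          Finsupp.mem_support_iff.mpr hm⟩)
    have hTsym : ∀ m ∈ T, -m ∈ T := by
      intro m hm
      rcases Finset.mem_union.mp hm with h | h
      · exact Finset.mem_union_right _ (Finset.mem_image.mpr ⟨m, h, rfl⟩)
      · obtain ⟨k, hk, hkm⟩ := Finset.mem_image.mp h
        exact Finset.mem_union_left _ (by rw [← hkm, neg_neg]; exact hk)
    have hrel : ∀ n : ℤ, (coeffM X n)ᴴ = -(coeffM X (-n)) := by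
      intro n; ext i j
      have hv := omega_coeff X i j (-n)
      rw [hω, neg_neg] at hv
      simp only [Matrix.conjTranspose_apply, Matrix.neg_apply, coeffM]
      rw [hv, neg_neg, starRingEnd_apply]
    have htr' : ∀ n : ℤ, Matrix.trace (coeffM X n) = 0 := by
      intro n
      have h2 : X 0 0 + X 1 1 = 0 := by rw [← Matrix.trace_fin_two]; exact htr
      have h3 := congrArg (fun f : LaurentPolynomial ℂ => f n) h2
      simp only [lp_add_apply, lp_zero_apply] at h3
      rw [Matrix.trace_fin_two]
      exact h3
    have hXsum : ∑ n ∈ T, tpow n (coeffM X n) = X := sum_tpow X T hT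
    have hneg : ∑ n ∈ T, tpow (-n) ((coeffM X n)ᴴ) = -X := by
      have e1 : ∑ n ∈ T, tpow (-n) ((coeffM X n)ᴴ)
          = ∑ n ∈ T, -(tpow (-n) (coeffM X (-n))) :=
        Finset.sum_congr rfl fun n _ => by rw [hrel n, tpow_neg]
      have e2 : ∑ n ∈ T, tpow (-n) (coeffM X (-n))
          = ∑ n ∈ T, tpow n (coeffM X n) := by
        refine Finset.sum_equiv (Equiv.neg ℤ) (fun n => ?_) (fun n hn => rfl)
        constructor
        · exact hTsym n
        · intro h
          have := hTsym _ h
          simpa using this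
      rw [e1, Finset.sum_neg_distrib, e2, hXsum]
    have h2X : ∑ n ∈ T, (tpow n (coeffM X n) - tpow (-n) ((coeffM X n)ᴴ)) = X + X := by
      rw [Finset.sum_sub_distrib, hXsum, hneg, sub_neg_eq_add]
    have hhalf : ((2 : ℝ)⁻¹ + 2⁻¹) = 1 := by norm_num
    have hX2 : X = (2⁻¹ : ℝ) • (X + X) := by
      rw [smul_add, ← add_smul, hhalf, one_smul]
    rw [hX2, ← h2X]
    exact Submodule.smul_mem _ _
      (Submodule.sum_mem _ fun n _ => key_pair n _ (htr' n))
  · intro X hX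
    exact (Submodule.span_le.mpr S_sub_K) hX

/-- The compact real form of the loop algebra of `sl₂` (the ω-fixed, trace-zero elements)
is the ℝ-linear span of the elements
`tⁿe − t⁻ⁿf`, `i(tⁿe + t⁻ⁿf)`, `tⁿh − t⁻ⁿh`, `i(tⁿh + t⁻ⁿh)`, `n ∈ ℤ`. -/
theorem compactRealForm_sl2 :
    {X : Loop 2 | omega X = X ∧ Matrix.trace X = 0} =
      ↑(Submodule.span ℝ
        {x : Loop 2 | ∃ n : ℤ,
          x = tpow n eMat - tpow (-n) fMat ∨
          x = Complex.I • (tpow n eMat + tpow (-n) fMat) ∨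
          x = tpow n hMat - tpow (-n) hMat ∨
          x = Complex.I • (tpow n hMat + tpow (-n) hMat)}) :=
  compactRealForm_sl2'
end
end
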